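/- Let s ∈ ℂ and define ι : ℂ⁵ → ℂ⁵ by ι(x) = (f4 + (s²/2)f2 − (1/16)f0, (s/4)f1 + s·f3, s²·f2, s·f1, f0), where fᵢ are evaluated at x. Let p : ℂ⁴ → ℂ⁵ be p(x0,x2,x3,x4) = (x0x3, s²x0x4 − s²x2² + x2² − (1/4)x2x4 + (1/4)x3², x2x3, x3², x3x4). Then ι(ι(p(x0,x2,x3,x4))) is a scalar multiple (by a polynomial factor) of p(x0,x2,x3,x4) for all (x0,x2,x3,x4) ∈ ℂ⁴. Hence ι induces a birational involution of the quadric Q = {(1−4s²)f2 + f5 = 0} ⊂ P⁴. -/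
import Mathlib

/-- ι : ℂ⁵ → ℂ⁵ from Case (2) of Theorem 3.1. -/
noncomputable def iotaMap (s : ℂ) (x : Fin 5 → ℂ) : Fin 5 → ℂ :=
  ![ ((x 1)^2 - (x 0)*(x 2)) + (s^2/2) * ((x 2)^2 - (x 0)*(x 4))
       - (1/16) * ((x 3)^2 - (x 2)*(x 4)),
     (s/4) * ((x 2)*(x 3) - (x 1)*(x 4)) + s * ((x 1)*(x 2) - (x 0)*(x 3)),
     s^2 * ((x 2)^2 - (x 0)*(x 4)),
     s * ((x 2)*(x 3) - (x 1)*(x 4)),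
     (x 3)^2 - (x 2)*(x 4) ]

/-- The rational parametrization p of the quadric. -/
noncomputable def pMap (s : ℂ) (x0 x2 x3 x4 : ℂ) : Fin 5 → ℂ :=
  ![ x0*x3,
     s^2*x0*x4 - s^2*x2^2 + x2^2 - (1/4)*x2*x4 + (1/4)*x3^2,
     x2*x3,
     x3^2,
     x3*x4 ]

set_option maxHeartbeats 2000000 in
theorem iota_involution (s : ℂ) (x0 x2 x3 x4 : ℂ) :
    ∃ c : ℂ, iotaMap s (iotaMap s (pMap s x0 x2 x3 x4)) = c • pMap s x0 x2 x3 x4 := by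
  refine ⟨(2:ℂ)*s^4*x2^3*x3^3 + (-2:ℂ)*s^6*x0*x2^2*x3*x4^2 + (1:ℂ)*s^6*x2^4*x3*x4 + (-2:ℂ)*s^4*x2^4*x3*x4 + (1/2:ℂ)*s^4*x2^3*x3*x4^2 + (-1/2:ℂ)*s^4*x2^2*x3^3*x4 + (-2:ℂ)*s^4*x0*x2*x3^3*x4 + (1:ℂ)*s^6*x0^2*x3*x4^3 + (2:ℂ)*s^4*x0*x2^2*x3*x4^2 + (-1/2:ℂ)*s^4*x0*x2*x3*x4^3 + (1/2:ℂ)*s^4*x0*x3^3*x4^2 + (-1/2:ℂ)*s^2*x2*x3^5 + (1:ℂ)*s^2*x2^2*x3^3*x4 + (-1/2:ℂ)*s^2*x2^3*x3*x4^2 + (-1/8:ℂ)*s^2*x2*x3^3*x4^2 + (1/16:ℂ)*s^2*x2^2*x3*x4^3 + (1/16:ℂ)*s^2*x3^5*x4 + (-1:ℂ)*s^2*x2^3*x3^3 + (1:ℂ)*s^2*x2^4*x3*x4 + (1:ℂ)*s^2*x0*x3^5 + (-1:ℂ)*s^2*x0*x2*x3^3*x4, ?_⟩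
  simp only [iotaMap, pMap, Matrix.cons_val_zero, Matrix.cons_val_one, Matrix.head_cons,
    Matrix.cons_val_two, Matrix.tail_cons, Matrix.cons_val_three, Matrix.cons_val_four,
    Matrix.smul_cons, smul_eq_mul, Matrix.smul_empty]
  refine congrArg₂ Matrix.vecCons (by ring) ?_
  refine congrArg₂ Matrix.vecCons (by ring) ?_
  refine congrArg₂ Matrix.vecCons (by ring) ?_
  refine congrArg₂ Matrix.vecCons (by ring) ?_
  exact congrArg₂ Matrix.vecCons (by ring) rfl
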